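/- Let Q̃ ∈ L(H) be positive definite (trivial kernel) and trace-class, ã ∈ H and c ∈ ℝ. Suppose h̃₀ ∈ H is a minimizer of Ṽ(h) := ⟨Q̃h, h⟩ − 2⟨ã, h⟩ + c, and for λ > 0 let h̃_λ := (Q̃ + λ)⁻¹ ã be the minimizer of Ṽ_λ(h) := Ṽ(h) + λ‖h‖². Then h̃_λ → h̃₀ in H as λ → 0 from above. Furthermore, if Q̃ = Q := E[k_Θ ⊗ k_Θ] is the kernel covariance operator, then ‖h̃_λ − h̃₀‖_{L²(μ)} ≤ (√λ / 2) ‖h̃₀‖ for every λ > 0. -/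

import Mathlib

open MeasureTheory Filter
open scoped RealInnerProductSpace

universe u

/-- A bounded operator on a real inner product space is positive semidefinite if it is
self-adjoint and has nonnegative quadratic form. -/
def IsPosSemidef {H : Type u} [NormedAddCommGroup H] [InnerProductSpace ℝ H]
    (T : H →L[ℝ] H) : Prop :=
  (∀ x y : H, ⟪T x, y⟫ = ⟪x, T y⟫) ∧ ∀ x : H, 0 ≤ ⟪T x, x⟫

/-- A (positive) bounded operator is trace-class if the sum of its diagonal entries with
respect to some Hilbert basis is finite. -/
def IsTraceClassOp {H : Type u} [NormedAddCommGroup H] [InnerProductSpace ℝ H]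
    (T : H →L[ℝ] H) : Prop :=
  ∃ (ι : Type u) (e : HilbertBasis ι ℝ H), Summable fun i : ι => ⟪T (e i), e i⟫

/-- The quadratic functional Ṽ(h) = ⟨Q̃h, h⟩ − 2⟨ã, h⟩ + c. -/
noncomputable def quadFun {H : Type u} [NormedAddCommGroup H]
    [InnerProductSpace ℝ H] (Q : H →L[ℝ] H) (a : H) (c : ℝ) (h : H) : ℝ :=
  ⟪Q h, h⟫ - 2 * ⟪a, h⟫ + c

/-- Let Q̃ be positive definite (trivial kernel) and trace-class, ã ∈ H,
c ∈ ℝ.  If h̃₀ minimizes Ṽ(h) = ⟨Q̃h,h⟩ − 2⟨ã,h⟩ + c and h̃_λ := (Q̃+λ)⁻¹ã is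
the minimizer of Ṽ(h) + λ‖h‖², then h̃_λ → h̃₀ in H as λ ↓ 0.  Furthermore, if Q̃ = Q
is the kernel covariance operator of a reproducing kernel Hilbert space
(⟨Qf, g⟩ = ∫ f(θ)g(θ) μ(dθ) with f(θ) = ⟨f, k_θ⟩), then
‖h̃_λ − h̃₀‖_{L²(μ)} ≤ (√λ/2)‖h̃₀‖ for every λ > 0. -/
theorem stmt_16 {H : Type u} [NormedAddCommGroup H] [InnerProductSpace ℝ H]
    [CompleteSpace H]
    (Q : H →L[ℝ] H) (hQ_pos : IsPosSemidef Q) (hQ_ker : LinearMap.ker (Q : H →ₗ[ℝ] H) = ⊥)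
    (hQ_tc : IsTraceClassOp Q)
    (a : H) (c : ℝ)
    (h₀ : H) (hmin : ∀ g : H, quadFun Q a c h₀ ≤ quadFun Q a c g)
    {Γ : Type u} [MetricSpace Γ] [TopologicalSpace.SeparableSpace Γ]
    [MeasurableSpace Γ] [BorelSpace Γ]
    (μ : Measure Γ) [IsProbabilityMeasure μ] (k : Γ → H) :
    Tendsto (fun lam : ℝ => Ring.inverse (Q + lam • (1 : H →L[ℝ] H)) a)
      (nhdsWithin 0 (Set.Ioi 0)) (nhds h₀) ∧
    ((∀ f g : H, (⟪Q f, g⟫ : ℝ) = ∫ θ, (⟪f, k θ⟫ : ℝ) * (⟪g, k θ⟫ : ℝ) ∂μ) →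
      ∀ lam : ℝ, 0 < lam →
        Real.sqrt (∫ θ, (⟪Ring.inverse (Q + lam • (1 : H →L[ℝ] H)) a - h₀, k θ⟫ : ℝ) ^ 2 ∂μ)
          ≤ Real.sqrt lam / 2 * ‖h₀‖) := by
  obtain ⟨hsym, hpos⟩ := hQ_pos
  -- Step 1: Q h₀ = a
  have ha : Q h₀ = a := by
    by_contra hne
    set v := Q h₀ - a with hv
    have hvne : v ≠ 0 := sub_ne_zero.mpr hne
    set S := (⟪Q v, v⟫ : ℝ) with hS
    have hS0 : 0 ≤ S := hpos v
    set t := ‖v‖^2 / (S+1) with htdef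
    have hvp : 0 < ‖v‖ := norm_pos_iff.mpr hvne
    have hv2 : (0:ℝ) < ‖v‖^2 := by positivity
    have ht : 0 < t := div_pos hv2 (by linarith)
    have expand : ∀ s : ℝ, (⟪Q (h₀ - s•v), h₀ - s•v⟫ - 2*⟪a, h₀ - s•v⟫ + c)
        = (⟪Q h₀, h₀⟫ - 2*⟪a,h₀⟫ + c) - 2*s*⟪v,v⟫ + s^2*(⟪Q v, v⟫:ℝ) := by
      intro s
      have e1 : (⟪Q v, h₀⟫:ℝ) = ⟪Q h₀, v⟫ := by rw [hsym v h₀, real_inner_comm]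
      have e2 : (⟪Q h₀, v⟫:ℝ) - ⟪a, v⟫ = ⟪v, v⟫ := by rw [← inner_sub_left]
      simp only [map_sub, ContinuousLinearMap.map_smul, inner_sub_left, inner_sub_right,
        real_inner_smul_left, real_inner_smul_right]
      linear_combination (-s)*e1 + (-2*s)*e2
    have hineq := hmin (h₀ - t•v)
    simp only [quadFun] at hineq
    rw [expand t, ← hS] at hineq
    have hvv : (⟪v,v⟫:ℝ) = ‖v‖^2 := real_inner_self_eq_norm_sq v
    have htS : t * (S+1) = ‖v‖^2 := by rw [htdef]; exact div_mul_cancel₀ _ (show (0:ℝ) < S+1 by linarith).ne'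
    rw [hvv] at hineq
    nlinarith [hineq, htS, ht, hv2, mul_pos ht ht, mul_pos ht hv2]
  -- Core facts about T = Q + lam • 1 for lam > 0
  have core : ∀ lam : ℝ, 0 < lam →
      (∀ x, Ring.inverse (Q + lam • (1 : H →L[ℝ] H)) ((Q + lam • (1 : H →L[ℝ] H)) x) = x) ∧
      (∀ x, (Q + lam • (1 : H →L[ℝ] H)) (Ring.inverse (Q + lam • (1 : H →L[ℝ] H)) x) = x) ∧
      (∀ x : H, lam * ‖x‖ ≤ ‖(Q + lam • (1 : H →L[ℝ] H)) x‖) := by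
    intro lam hlam
    set T := Q + lam • (1 : H →L[ℝ] H) with hT
    have hTapp : ∀ x : H, T x = Q x + lam • x := by
      intro x; simp [hT]
    have hlow : ∀ x : H, lam * ‖x‖ ≤ ‖T x‖ := by
      intro x
      rcases eq_or_ne x 0 with h | h
      · simp [h]
      · have h1 : lam * ‖x‖^2 ≤ ⟪T x, x⟫ := by
          have h2 := hpos x
          have : (⟪T x, x⟫ : ℝ) = ⟪Q x, x⟫ + lam * ‖x‖^2 := by
            rw [hTapp, inner_add_left, real_inner_smul_left, real_inner_self_eq_norm_sq]
          linarith
        have h2 : (⟪T x, x⟫:ℝ) ≤ ‖T x‖ * ‖x‖ := real_inner_le_norm _ _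
        have hx : 0 < ‖x‖ := norm_pos_iff.mpr h
        have := mul_le_mul_of_nonneg_right (le_trans h1 h2 : lam * ‖x‖^2 ≤ ‖T x‖ * ‖x‖) (le_of_lt (inv_pos.mpr hx))
        calc lam * ‖x‖ = lam * ‖x‖^2 * ‖x‖⁻¹ := by field_simp
          _ ≤ ‖T x‖ * ‖x‖ * ‖x‖⁻¹ := this
          _ = ‖T x‖ := by field_simp
    have hinj : ∀ x : H, T x = 0 → x = 0 := by
      intro x hx
      have := hlow x
      rw [hx, norm_zero] at this
      have : ‖x‖ ≤ 0 := by
        by_contra hc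
        push_neg at hc
        nlinarith
      simpa using le_antisymm this (norm_nonneg x)
    have hTsym : ∀ x y : H, (⟪T x, y⟫:ℝ) = ⟪x, T y⟫ := by
      intro x y
      rw [hTapp, hTapp, inner_add_left, inner_add_right, hsym, real_inner_smul_left,
        real_inner_smul_right]
    have hker : LinearMap.ker (T : H →ₗ[ℝ] H) = ⊥ := by
      rw [LinearMap.ker_eq_bot']
      intro m hm
      exact hinj m hm
    have hclosed : IsClosed (Set.range T) := by
      have hanti : AntilipschitzWith (Real.toNNReal lam⁻¹) T := by
        apply T.antilipschitz_of_bound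
        intro x
        have := hlow x
        rw [Real.coe_toNNReal _ (le_of_lt (inv_pos.mpr hlam)), inv_mul_eq_div,
          le_div_iff₀ hlam]
        linarith [hlow x]
      exact hanti.isClosed_range T.uniformContinuous
    have hrange : LinearMap.range (T : H →ₗ[ℝ] H) = ⊤ := by
      have hdense : (LinearMap.range (T : H →ₗ[ℝ] H)).topologicalClosure = ⊤ := by
        rw [Submodule.topologicalClosure_eq_top_iff, Submodule.eq_bot_iff]
        intro x hx
        have hx' : ∀ y : H, (⟪T y, x⟫:ℝ) = 0 := by
          intro y
          exact hx (T y) (LinearMap.mem_range.mpr ⟨y, rfl⟩)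
        have hTx : T x = 0 := by
          have h0 : (⟪T x, T x⟫:ℝ) = 0 := by
            rw [hTsym]
            have := hx' (T x)
            rwa [real_inner_comm] at this
          exact inner_self_eq_zero.mp h0
        exact hinj x hTx
      have hcl : (LinearMap.range (T : H →ₗ[ℝ] H)).topologicalClosure = LinearMap.range (T : H →ₗ[ℝ] H) := by
        apply IsClosed.submodule_topologicalClosure_eq
        have : (LinearMap.range (T : H →ₗ[ℝ] H) : Set H) = Set.range T := by
          ext y; simp [LinearMap.mem_range]
        rw [this]
        exact hclosed
      rw [← hcl]; exact hdense
    have hU : IsUnit T := by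
      let e := ContinuousLinearEquiv.ofBijective T hker hrange
      refine ⟨⟨T, (e.symm : H →L[ℝ] H), ?_, ?_⟩, rfl⟩
      · ext x
        exact e.apply_symm_apply x
      · ext x
        exact e.symm_apply_apply x
    refine ⟨?_, ?_, hlow⟩
    · intro x
      have h1 := Ring.inverse_mul_cancel T hU
      calc Ring.inverse T (T x) = (Ring.inverse T * T) x := rfl
        _ = x := by rw [h1]; rfl
    · intro x
      have h1 := Ring.mul_inverse_cancel T hU
      calc T (Ring.inverse T x) = (T * Ring.inverse T) x := rfl
        _ = x := by rw [h1]; rfl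
  -- difference formula
  have hdiff : ∀ lam : ℝ, 0 < lam →
      Ring.inverse (Q + lam • (1 : H →L[ℝ] H)) a - h₀
        = -(lam • Ring.inverse (Q + lam • (1 : H →L[ℝ] H)) h₀) := by
    intro lam hlam
    obtain ⟨hc1, hc2, hlow⟩ := core lam hlam
    set T := Q + lam • (1 : H →L[ℝ] H) with hT
    set R := Ring.inverse T with hR
    have hTapp : T h₀ = Q h₀ + lam • h₀ := by simp [hT]
    have : R a - h₀ = R (Q h₀) - R (T h₀) := by rw [← ha, hc1]
    rw [this, ← map_sub, hTapp]
    have : Q h₀ - (Q h₀ + lam • h₀) = -(lam • h₀) := by abel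
    rw [this, map_neg, ContinuousLinearMap.map_smul]
  -- norm bound for inverse
  have hRnorm : ∀ lam : ℝ, 0 < lam → ∀ y : H,
      ‖Ring.inverse (Q + lam • (1 : H →L[ℝ] H)) y‖ ≤ lam⁻¹ * ‖y‖ := by
    intro lam hlam y
    obtain ⟨hc1, hc2, hlow⟩ := core lam hlam
    have := hlow (Ring.inverse (Q + lam • (1 : H →L[ℝ] H)) y)
    rw [hc2 y] at this
    rw [← le_div_iff₀' hlam] at this
    rw [div_eq_inv_mul] at this
    exact this
  constructor
  · -- Tendsto
    rw [Metric.tendsto_nhdsWithin_nhds]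
    intro ε hε
    -- density of range of Q
    have hQdense : Dense ((LinearMap.range (Q : H →ₗ[ℝ] H) : Submodule ℝ H) : Set H) := by
      rw [Submodule.dense_iff_topologicalClosure_eq_top,
        Submodule.topologicalClosure_eq_top_iff, Submodule.eq_bot_iff]
      intro x hx
      have hx' : ∀ y : H, (⟪Q y, x⟫:ℝ) = 0 := by
        intro y
        exact hx (Q y) (LinearMap.mem_range.mpr ⟨y, rfl⟩)
      have hQx : Q x = 0 := by
        have h0 : (⟪Q x, Q x⟫:ℝ) = 0 := by
          rw [hsym]
          have := hx' (Q x)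
          rwa [real_inner_comm] at this
        exact inner_self_eq_zero.mp h0
      have : x ∈ LinearMap.ker (Q : H →ₗ[ℝ] H) := hQx
      rwa [hQ_ker, Submodule.mem_bot] at this
    obtain ⟨b, hbmem, hbdist⟩ := Metric.mem_closure_iff.mp (hQdense h₀) (ε/2) (by linarith)
    obtain ⟨v, rfl⟩ := LinearMap.mem_range.mp hbmem
    rw [dist_eq_norm] at hbdist
    refine ⟨ε / (4 * (‖v‖ + 1)), by positivity, ?_⟩
    intro lam hlam hdist
    rw [Set.mem_Ioi] at hlam
    rw [Real.dist_eq, sub_zero, abs_of_pos hlam] at hdist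
    obtain ⟨hc1, hc2, hlow⟩ := core lam hlam
    set T := Q + lam • (1 : H →L[ℝ] H) with hT
    set R := Ring.inverse T with hR
    rw [dist_eq_norm, hdiff lam hlam, norm_neg, norm_smul, Real.norm_eq_abs, abs_of_pos hlam]
    -- R h₀ = R (h₀ - Q v) + R (Q v), R (Q v) = v - lam • R v
    have hRQv : R (Q v) = v - lam • R v := by
      have hTv : T v = Q v + lam • v := by simp [hT]
      have : R (Q v) = R (T v) - R (lam • v) := by
        rw [← map_sub]
        congr 1
        rw [hTv]; abel
      rw [this, hc1, ContinuousLinearMap.map_smul]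
    have hsplit : R h₀ = R (h₀ - Q v) + R (Q v) := by
      rw [← map_add]; congr 1; abel
    have hb1 : ‖R (h₀ - Q v)‖ ≤ lam⁻¹ * ‖h₀ - Q v‖ := hRnorm lam hlam _
    have hb2 : ‖R (Q v)‖ ≤ ‖v‖ + lam * (lam⁻¹ * ‖v‖) := by
      rw [hRQv]
      calc ‖v - lam • R v‖ ≤ ‖v‖ + ‖lam • R v‖ := norm_sub_le _ _
        _ = ‖v‖ + lam * ‖R v‖ := by rw [norm_smul, Real.norm_eq_abs, abs_of_pos hlam]
        _ ≤ ‖v‖ + lam * (lam⁻¹ * ‖v‖) := by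
            have := hRnorm lam hlam v
            nlinarith
    have hb2' : ‖R (Q v)‖ ≤ 2 * ‖v‖ := by
      have : lam * (lam⁻¹ * ‖v‖) = ‖v‖ := by field_simp
      rw [this] at hb2; linarith
    have htotal : lam * ‖R h₀‖ ≤ ‖h₀ - Q v‖ + 2 * lam * ‖v‖ := by
      calc lam * ‖R h₀‖ ≤ lam * (‖R (h₀ - Q v)‖ + ‖R (Q v)‖) := by
            rw [hsplit]
            exact mul_le_mul_of_nonneg_left (norm_add_le _ _) hlam.le
        _ ≤ lam * (lam⁻¹ * ‖h₀ - Q v‖ + 2 * ‖v‖) := by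
            apply mul_le_mul_of_nonneg_left _ hlam.le
            linarith
        _ = ‖h₀ - Q v‖ + 2 * lam * ‖v‖ := by field_simp
    have h1 : ‖h₀ - Q v‖ < ε/2 := hbdist
    have h2 : 2 * lam * ‖v‖ ≤ ε/2 := by
      have hv1 : ‖v‖ ≤ ‖v‖ + 1 := by linarith
      have : 2 * lam * ‖v‖ ≤ 2 * (ε / (4 * (‖v‖ + 1))) * (‖v‖ + 1) := by
        apply mul_le_mul (by nlinarith [norm_nonneg v]) hv1 (norm_nonneg v)
        positivity
      calc 2 * lam * ‖v‖ ≤ 2 * (ε / (4 * (‖v‖ + 1))) * (‖v‖ + 1) := this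
        _ = ε/2 := by field_simp; ring
    linarith
  · -- L² bound
    intro hcov lam hlam
    obtain ⟨hc1, hc2, hlow⟩ := core lam hlam
    set T := Q + lam • (1 : H →L[ℝ] H) with hT
    set R := Ring.inverse T with hR
    set u := R h₀ with hu
    set d := R a - h₀ with hd
    have hdu : d = -(lam • u) := hdiff lam hlam
    have hint : (∫ θ, (⟪d, k θ⟫:ℝ)^2 ∂μ) = ⟪Q d, d⟫ := by
      rw [hcov d d]
      congr 1
      funext θ
      ring
    have hQd : (⟪Q d, d⟫:ℝ) = lam^2 * ⟪Q u, u⟫ := by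
      rw [hdu]
      simp only [map_neg, ContinuousLinearMap.map_smul, inner_neg_neg, real_inner_smul_left,
        real_inner_smul_right]
      ring
    have hh : h₀ = Q u + lam • u := by
      have := hc2 h₀
      have h2 : T u = Q u + lam • u := by simp [hT]
      rw [← this]; exact h2
    have hexp : ‖h₀‖^2 = ‖Q u‖^2 + 2 * lam * ⟪Q u, u⟫ + lam^2 * ‖u‖^2 := by
      rw [← real_inner_self_eq_norm_sq]
      nth_rewrite 1 [hh]
      nth_rewrite 1 [hh]
      rw [real_inner_add_add_self]
      simp only [real_inner_smul_left, real_inner_smul_right, real_inner_self_eq_norm_sq]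
      rw [norm_smul, Real.norm_eq_abs, abs_of_pos hlam, mul_pow]
      ring
    have hcs : (⟪Q u, u⟫:ℝ) ≤ ‖Q u‖ * ‖u‖ := real_inner_le_norm _ _
    have hkey : 4 * lam * ⟪Q u, u⟫ ≤ ‖h₀‖^2 := by
      have h1 : 2*lam*(⟪Q u, u⟫:ℝ) ≤ 2*lam*(‖Q u‖*‖u‖) :=
        mul_le_mul_of_nonneg_left hcs (by positivity)
      have h2 : 2*lam*(‖Q u‖*‖u‖) ≤ ‖Q u‖^2 + lam^2*‖u‖^2 := by
        nlinarith [sq_nonneg (‖Q u‖ - lam * ‖u‖)]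
      linarith [hexp, h1, h2]
    have hfin : (∫ θ, (⟪d, k θ⟫:ℝ)^2 ∂μ) ≤ (Real.sqrt lam / 2 * ‖h₀‖)^2 := by
      rw [hint, hQd]
      have hsq : (Real.sqrt lam / 2 * ‖h₀‖)^2 = lam / 4 * ‖h₀‖^2 := by
        rw [mul_pow, div_pow, Real.sq_sqrt hlam.le]
        ring
      rw [hsq]
      have h3 := mul_le_mul_of_nonneg_left hkey (show (0:ℝ) ≤ lam/4 by positivity)
      have h4 : lam/4 * (4*lam*(⟪Q u, u⟫:ℝ)) = lam^2*⟪Q u, u⟫ := by ring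
      linarith [h3, h4]
    calc Real.sqrt (∫ θ, (⟪d, k θ⟫:ℝ)^2 ∂μ) ≤ Real.sqrt ((Real.sqrt lam / 2 * ‖h₀‖)^2) :=
          Real.sqrt_le_sqrt hfin
      _ = Real.sqrt lam / 2 * ‖h₀‖ := Real.sqrt_sq (by positivity)
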